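/- Let q be a prime power and A = F_q[T]. The set of finite-index subgroups of SL₂(A) is uncountable. -/

import Mathlib

open Matrix Polynomial

open Pointwise

section Aux

variable {Fq : Type*} [Field Fq] [Fintype Fq]

local notation "R" => Polynomial Fq
local notation "SL2" => Matrix.SpecialLinearGroup (Fin 2) (Polynomial Fq)

/-- upper unipotent -/
noncomputable def um (f : R) : SL2 := ⟨!![1, f; 0, 1], by simp [Matrix.det_fin_two_of]⟩
/-- lower unipotent -/
noncomputable def lm (g : R) : SL2 := ⟨!![1, 0; g, 1], by simp [Matrix.det_fin_two_of]⟩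

lemma um_mul_00 (f : R) (M : SL2) : (um f * M).1 0 0 = M.1 0 0 + f * M.1 1 0 := by
  rw [Matrix.SpecialLinearGroup.coe_mul]
  simp [um, Matrix.mul_apply, Fin.sum_univ_two]
lemma um_mul_01 (f : R) (M : SL2) : (um f * M).1 0 1 = M.1 0 1 + f * M.1 1 1 := by
  rw [Matrix.SpecialLinearGroup.coe_mul]
  simp [um, Matrix.mul_apply, Fin.sum_univ_two]
lemma um_mul_10 (f : R) (M : SL2) : (um f * M).1 1 0 = M.1 1 0 := by
  rw [Matrix.SpecialLinearGroup.coe_mul]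
  simp [um, Matrix.mul_apply, Fin.sum_univ_two]
lemma um_mul_11 (f : R) (M : SL2) : (um f * M).1 1 1 = M.1 1 1 := by
  rw [Matrix.SpecialLinearGroup.coe_mul]
  simp [um, Matrix.mul_apply, Fin.sum_univ_two]
lemma lm_mul_00 (g : R) (M : SL2) : (lm g * M).1 0 0 = M.1 0 0 := by
  rw [Matrix.SpecialLinearGroup.coe_mul]
  simp [lm, Matrix.mul_apply, Fin.sum_univ_two]
lemma lm_mul_01 (g : R) (M : SL2) : (lm g * M).1 0 1 = M.1 0 1 := by
  rw [Matrix.SpecialLinearGroup.coe_mul]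
  simp [lm, Matrix.mul_apply, Fin.sum_univ_two]
lemma lm_mul_10 (g : R) (M : SL2) : (lm g * M).1 1 0 = g * M.1 0 0 + M.1 1 0 := by
  rw [Matrix.SpecialLinearGroup.coe_mul]
  simp [lm, Matrix.mul_apply, Fin.sum_univ_two]
lemma lm_mul_11 (g : R) (M : SL2) : (lm g * M).1 1 1 = g * M.1 0 1 + M.1 1 1 := by
  rw [Matrix.SpecialLinearGroup.coe_mul]
  simp [lm, Matrix.mul_apply, Fin.sum_univ_two]

lemma um_add (f g : R) : um (f + g) = um f * um g := by
  ext i j : 1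
  rw [Matrix.SpecialLinearGroup.coe_mul]
  fin_cases i <;> fin_cases j <;>
    simp [um, Matrix.mul_apply, Fin.sum_univ_two] <;> ring

lemma lm_add (f g : R) : lm (f + g) = lm f * lm g := by
  ext i j : 1
  rw [Matrix.SpecialLinearGroup.coe_mul]
  fin_cases i <;> fin_cases j <;>
    simp [lm, Matrix.mul_apply, Fin.sum_univ_two] <;> ring

end Aux

section FP

variable (Fq : Type*) [Field Fq] [Fintype Fq]

local notation "R" => Polynomial Fq
local notation "SL2" => Matrix.SpecialLinearGroup (Fin 2) (Polynomial Fq)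

/-- the two factor groups -/
abbrev fpFam : Bool → Type _ := fun _ => Multiplicative (Polynomial Fq)

noncomputable def uHom : Multiplicative (Polynomial Fq) →* SL2 :=
  MonoidHom.mk' (fun f => um f.toAdd) (fun f g => um_add _ _)

noncomputable def lHomX : Multiplicative (Polynomial Fq) →* SL2 :=
  MonoidHom.mk' (fun g => lm (X * g.toAdd)) (fun f g => by
    simp only [toAdd_mul, mul_add]; exact lm_add _ _)

noncomputable def fpMaps : ∀ b : Bool, fpFam Fq b →* SL2 := fun b =>
  match b with
  | true => uHom Fq
  | false => lHomX Fq

noncomputable def Phi : Monoid.CoprodI (fpFam Fq) →* SL2 :=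
  Monoid.CoprodI.lift (fpMaps Fq)

lemma Phi_of_true (f : R) :
    Phi Fq (Monoid.CoprodI.of (i := true) (Multiplicative.ofAdd f)) = um f := by
  simp [Phi, Monoid.CoprodI.lift_of, fpMaps, uHom]

lemma Phi_of_false (g : R) :
    Phi Fq (Monoid.CoprodI.of (i := false) (Multiplicative.ofAdd g)) = lm (X * g) := by
  simp [Phi, Monoid.CoprodI.lift_of, fpMaps, lHomX]

/-- ping-pong sets -/
def XS : Bool → Set SL2
  | true =>
    {M | M.1 0 0 ≠ 0 ∧ M.1 0 1 ≠ 0 ∧ (M.1 1 0).degree ≤ (M.1 0 0).degree ∧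
      (M.1 1 1).degree ≤ (M.1 0 1).degree}
  | false =>
    {M | (M.1 0 0).degree < (M.1 1 0).degree ∧ (M.1 0 1).degree < (M.1 1 1).degree}

lemma XS_nonempty : ∀ b, (XS Fq b).Nonempty := by
  intro b
  cases b
  · refine ⟨lm X, ?_⟩
    simp only [XS, lm, Set.mem_setOf_eq]
    constructor
    · show (1 : Polynomial Fq).degree < (X : Polynomial Fq).degree
      simp [Polynomial.degree_one, Polynomial.degree_X]
    · show (0 : Polynomial Fq).degree < (1 : Polynomial Fq).degree
      simp [Polynomial.degree_zero, Polynomial.degree_one]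
  · refine ⟨um 1, ?_⟩
    simp only [XS, um, Set.mem_setOf_eq]
    refine ⟨one_ne_zero, one_ne_zero, ?_, ?_⟩ <;> simp

lemma XS_disjoint : Pairwise (Function.onFun Disjoint (XS Fq)) := by
  intro i j hij
  have : ∀ M : SL2, M ∈ XS Fq true → M ∈ XS Fq false → False := by
    intro M hT hF
    simp only [XS, Set.mem_setOf_eq] at hT hF
    exact absurd hF.1 (not_lt.mpr hT.2.2.1)
  cases i <;> cases j <;> simp at hij <;>
    exact Set.disjoint_left.mpr (by intro M h1 h2; cases this M (by assumption) (by assumption))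

lemma XS_pp : Pairwise fun i j => ∀ h : fpFam Fq i, h ≠ 1 →
    (fpMaps Fq i) h • XS Fq j ⊆ XS Fq i := by
  have keyle : ∀ (f c : R), f ≠ 0 → c ≠ 0 → c.degree ≤ (f * c).degree := by
    intro f c hf hc
    simpa [mul_comm] using Polynomial.degree_le_mul_left c hf
  have keylt : ∀ (g a : R), g ≠ 0 → a ≠ 0 → a.degree < (X * g * a).degree := by
    intro g a hg ha
    rw [Polynomial.degree_mul, Polynomial.degree_mul, Polynomial.degree_X]
    rw [Polynomial.degree_eq_natDegree hg, Polynomial.degree_eq_natDegree ha]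
    norm_cast
    omega
  intro i j hij
  cases i <;> cases j <;> (try exact absurd rfl hij)
  · -- i = false, j = true : lower letters send XS true into XS false
    intro h hne M hM
    obtain ⟨N, hN, rfl⟩ := hM
    have hg : h.toAdd ≠ 0 := by
      simpa [← ofAdd_zero] using hne
    simp only [XS, Set.mem_setOf_eq] at hN
    obtain ⟨ha, hb, hca, hdb⟩ := hN
    show (fpMaps Fq false) h • N ∈ XS Fq false
    have : (fpMaps Fq false) h • N = lm (X * h.toAdd) * N := rfl
    rw [this]
    simp only [XS, Set.mem_setOf_eq]
    rw [lm_mul_00, lm_mul_01, lm_mul_10, lm_mul_11]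
    constructor
    · rw [add_comm, Polynomial.degree_add_eq_right_of_degree_lt
        (lt_of_le_of_lt hca (keylt _ _ hg ha))]
      exact keylt _ _ hg ha
    · rw [add_comm, Polynomial.degree_add_eq_right_of_degree_lt
        (lt_of_le_of_lt hdb (keylt _ _ hg hb))]
      exact keylt _ _ hg hb
  · -- i = true, j = false : upper letters send XS false into XS true
    intro h hne M hM
    obtain ⟨N, hN, rfl⟩ := hM
    have hf : h.toAdd ≠ 0 := by simpa [← ofAdd_zero] using hne
    simp only [XS, Set.mem_setOf_eq] at hN
    obtain ⟨hac, hbd⟩ := hN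
    have hc : N.1 1 0 ≠ 0 := Polynomial.ne_zero_of_degree_gt hac
    have hd : N.1 1 1 ≠ 0 := Polynomial.ne_zero_of_degree_gt hbd
    show (fpMaps Fq true) h • N ∈ XS Fq true
    have : (fpMaps Fq true) h • N = um h.toAdd * N := rfl
    rw [this]
    simp only [XS, Set.mem_setOf_eq]
    rw [um_mul_00, um_mul_01, um_mul_10, um_mul_11]
    have h1 : (N.1 0 0).degree < (N.1 0 0 + h.toAdd * N.1 1 0).degree := by
      rw [Polynomial.degree_add_eq_right_of_degree_lt
        (lt_of_lt_of_le hac (keyle _ _ hf hc))]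
      exact lt_of_lt_of_le hac (keyle _ _ hf hc)
    have h2 : (N.1 0 1).degree < (N.1 0 1 + h.toAdd * N.1 1 1).degree := by
      rw [Polynomial.degree_add_eq_right_of_degree_lt
        (lt_of_lt_of_le hbd (keyle _ _ hf hd))]
      exact lt_of_lt_of_le hbd (keyle _ _ hf hd)
    refine ⟨Polynomial.ne_zero_of_degree_gt h1, Polynomial.ne_zero_of_degree_gt h2, ?_, ?_⟩
    · rw [Polynomial.degree_add_eq_right_of_degree_lt
        (lt_of_lt_of_le hac (keyle _ _ hf hc))]
      exact keyle _ _ hf hc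
    · rw [Polynomial.degree_add_eq_right_of_degree_lt
        (lt_of_lt_of_le hbd (keyle _ _ hf hd))]
      exact keyle _ _ hf hd

theorem Phi_injective : Function.Injective (Phi Fq) := by
  apply Monoid.CoprodI.lift_injective_of_ping_pong (fpMaps Fq)
    (Or.inr ⟨true, ?_⟩) (XS Fq) (XS_nonempty Fq) (XS_disjoint Fq) (XS_pp Fq)
  calc (3 : Cardinal) ≤ Cardinal.aleph0 := by
        exact_mod_cast (Cardinal.nat_lt_aleph0 3).le
    _ ≤ Cardinal.mk (Multiplicative (Polynomial Fq)) := Cardinal.aleph0_le_mk _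

end FP

section Gen

variable (Fq : Type*) [Field Fq] [Fintype Fq]

local notation "R" => Polynomial Fq
local notation "SL2" => Matrix.SpecialLinearGroup (Fin 2) (Polynomial Fq)

lemma um_mem (f : R) : um f ∈ (Phi Fq).range :=
  ⟨Monoid.CoprodI.of (i := true) (Multiplicative.ofAdd f), Phi_of_true Fq f⟩

lemma lm_mem (s : R) (hs : s.eval 0 = 0) : lm s ∈ (Phi Fq).range := by
  have hdvd : (X : R) ∣ s := Polynomial.X_dvd_iff.mpr
    (by rwa [Polynomial.coeff_zero_eq_eval_zero])
  obtain ⟨s', rfl⟩ := hdvd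
  exact ⟨Monoid.CoprodI.of (i := false) (Multiplicative.ofAdd s'), Phi_of_false Fq s'⟩

lemma mem_range_of_c_eq_zero (M : SL2) (h1 : (M.1 0 0).eval 0 = 1)
    (hc : M.1 1 0 = 0) : M ∈ (Phi Fq).range := by
  have hdet : M.1.det = 1 := M.2
  rw [Matrix.det_fin_two] at hdet
  rw [hc, mul_zero, sub_zero] at hdet
  have hu : IsUnit (M.1 0 0) := IsUnit.of_mul_eq_one _ hdet
  obtain ⟨r, hru, hra⟩ := Polynomial.isUnit_iff.mp hu
  have hr1 : r = 1 := by
    have := congrArg (Polynomial.eval 0) hra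
    simpa [h1] using this
  have ha : M.1 0 0 = 1 := by rw [← hra, hr1, Polynomial.C_1]
  have hd : M.1 1 1 = 1 := by rwa [ha, one_mul] at hdet
  have : M = um (M.1 0 1) := by
    ext i j : 1
    fin_cases i <;> fin_cases j <;> simp [um, ha, hc, hd]
  rw [this]
  exact um_mem Fq _

theorem mem_range_aux (n : ℕ) : ∀ (M : SL2), (M.1 1 0).natDegree ≤ n →
    (M.1 0 0).eval 0 = 1 → (M.1 1 0).eval 0 = 0 → M ∈ (Phi Fq).range := by
  induction n with
  | zero =>
    intro M hdeg h1 h2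
    by_cases hc : M.1 1 0 = 0
    · exact mem_range_of_c_eq_zero Fq M h1 hc
    · exfalso
      obtain ⟨k, hk⟩ := Polynomial.natDegree_eq_zero.mp (Nat.le_zero.mp hdeg)
      apply hc
      rw [← hk]
      have : k = 0 := by
        have := congrArg (Polynomial.eval 0) hk
        simpa [h2] using this
      rw [this, map_zero]
  | succ n ih =>
    intro M hdeg h1 h2
    by_cases hc : M.1 1 0 = 0
    · exact mem_range_of_c_eq_zero Fq M h1 hc
    set a : R := M.1 0 0 with ha_def
    set c : R := M.1 1 0 with hc_def
    -- Step 1 : reduce the degree of the upper-left entry below deg c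
    set cm : R := c * Polynomial.C (c.leadingCoeff)⁻¹ with hcm_def
    have hcm : cm.Monic := Polynomial.monic_mul_leadingCoeff_inv hc
    set f : R := -(Polynomial.C (c.leadingCoeff)⁻¹ * (a /ₘ cm)) with hf_def
    have hfact : a + f * c = a %ₘ cm := by
      rw [Polynomial.modByMonic_eq_sub_mul_div a cm, hcm_def, hf_def]
      ring
    have hdeg₁ : (a + f * c).degree < c.degree := by
      rw [hfact]
      have h := Polynomial.degree_modByMonic_lt a hcm
      rwa [hcm_def, Polynomial.degree_mul_leadingCoeff_inv _ hc] at h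
    have heval₁ : (a + f * c).eval 0 = 1 := by
      simp [h1, h2]
    have ha₁ : a + f * c ≠ 0 := by
      intro h0; rw [h0] at heval₁; simp at heval₁
    -- Step 2 : reduce the degree of the lower-left entry below deg c
    set a₁ : R := a + f * c with ha₁_def
    set am : R := a₁ * Polynomial.C (a₁.leadingCoeff)⁻¹ with ham_def
    have ham : am.Monic := Polynomial.monic_mul_leadingCoeff_inv ha₁
    set Q : R := Polynomial.C (a₁.leadingCoeff)⁻¹ * (c /ₘ am) with hQ_def
    set r : R := c %ₘ am with hr_def
    have hQr : c = a₁ * Q + r := by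
      have h := Polynomial.modByMonic_add_div c am
      rw [← h, hQ_def, ham_def, hr_def]
      ring
    have hrdeg : r.degree < a₁.degree := by
      have h := Polynomial.degree_modByMonic_lt c ham
      rwa [ham_def, Polynomial.degree_mul_leadingCoeff_inv _ ha₁] at h
    set s : R := Q - Polynomial.C (Q.eval 0) with hs_def
    have hs0 : s.eval 0 = 0 := by simp [hs_def]
    set c₂ : R := -s * a₁ + c with hc₂_def
    have hc₂alt : c₂ = r + Polynomial.C (Q.eval 0) * a₁ := by
      rw [hc₂_def, hs_def]
      rw [hQr]
      ring
    have hc₂deg : c₂.degree < c.degree := by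
      rw [hc₂alt]
      refine (Polynomial.degree_add_le _ _).trans_lt (max_lt (hrdeg.trans hdeg₁) ?_)
      refine (Polynomial.degree_mul_le _ _).trans_lt ?_
      refine lt_of_le_of_lt (b := (0 : WithBot ℕ) + a₁.degree) ?_ ?_
      · exact add_le_add_left Polynomial.degree_C_le _
      · rw [zero_add]; exact hdeg₁
    have hc₂eval : c₂.eval 0 = 0 := by
      simp [hc₂_def, hs0, ← hc_def, h2]
    -- the reduced matrix
    set M₂ : SL2 := lm (-s) * (um f * M) with hM₂_def
    have h00 : M₂.1 0 0 = a₁ := by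
      rw [hM₂_def, lm_mul_00, um_mul_00, ha₁_def]
    have h10 : M₂.1 1 0 = c₂ := by
      rw [hM₂_def, lm_mul_10, um_mul_10, um_mul_00, hc₂_def, ha₁_def]
    have hM₂mem : M₂ ∈ (Phi Fq).range := by
      by_cases hzero : c₂ = 0
      · exact mem_range_of_c_eq_zero Fq M₂ (by rw [h00, ha₁_def]; exact heval₁)
          (by rw [h10]; exact hzero)
      · apply ih M₂ _ (by rw [h00, ha₁_def]; exact heval₁) (by rw [h10]; exact hc₂eval)
        rw [h10]
        have hlt : c₂.natDegree < c.natDegree := Polynomial.natDegree_lt_natDegree hzero hc₂deg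
        omega
    have hMeq : M = (um f)⁻¹ * ((lm (-s))⁻¹ * M₂) := by
      rw [hM₂_def, inv_mul_cancel_left, inv_mul_cancel_left]
    rw [hMeq]
    exact mul_mem (inv_mem (um_mem Fq f))
      (mul_mem (inv_mem (lm_mem Fq (-s) (by simp [hs0]))) hM₂mem)

theorem mem_range_of_evals (M : SL2) (h1 : (M.1 0 0).eval 0 = 1)
    (h2 : (M.1 1 0).eval 0 = 0) : M ∈ (Phi Fq).range :=
  mem_range_aux Fq (M.1 1 0).natDegree M le_rfl h1 h2

end Gen

section Assemble

variable (Fq : Type*) [Field Fq] [Fintype Fq]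

local notation "R" => Polynomial Fq
local notation "SL2" => Matrix.SpecialLinearGroup (Fin 2) (Polynomial Fq)

/-- reduction mod T -/
noncomputable def evZero : SL2 →* Matrix.SpecialLinearGroup (Fin 2) Fq :=
  Matrix.SpecialLinearGroup.map (Polynomial.evalRingHom (0 : Fq))

lemma ker_evZero_le_range : (evZero Fq).ker ≤ (Phi Fq).range := by
  intro M hM
  rw [MonoidHom.mem_ker] at hM
  have hMat : ((evZero Fq) M).1 = (1 : Matrix.SpecialLinearGroup (Fin 2) Fq).1 :=
    congrArg Subtype.val hM
  have key : ∀ i j, Polynomial.eval 0 (M.1 i j) = (1 : Matrix (Fin 2) (Fin 2) Fq) i j := by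
    intro i j
    have := congrFun (congrFun hMat i) j
    simpa [evZero, Matrix.SpecialLinearGroup.map_apply_coe, RingHom.mapMatrix_apply,
      Matrix.map_apply] using this
  apply mem_range_of_evals
  · have := key 0 0
    rwa [Matrix.one_apply_eq] at this
  · have := key 1 0
    rwa [Matrix.one_apply_ne (by decide)] at this

instance rangePhi_finiteIndex : (Phi Fq).range.FiniteIndex := by
  haveI : Finite (Matrix.SpecialLinearGroup (Fin 2) Fq) := Subtype.finite
  exact Subgroup.finiteIndex_of_le (ker_evZero_le_range Fq)

/-- coefficient functionals -/
noncomputable def chiF (c : ℕ → Bool) : Polynomial Fq →+ Fq :=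
  AddMonoidHom.mk' (fun p => p.sum fun n a => if c n then a else 0) (fun p q =>
    Polynomial.sum_add_index p q (fun n (a : Fq) => if c n then a else 0)
      (fun n => by by_cases h : c n <;> simp [h])
      (fun n a b => by by_cases h : c n <;> simp [h]))

lemma chiF_apply (c : ℕ → Bool) (p : Polynomial Fq) :
    chiF Fq c p = p.sum fun n a => if c n then a else 0 := rfl

lemma chiF_monomial (c : ℕ → Bool) (n : ℕ) :
    chiF Fq c (Polynomial.monomial n 1) = if c n then 1 else 0 := by
  rw [chiF_apply, Polynomial.sum_monomial_index]
  by_cases h : c n <;> simp [h]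

noncomputable def psiF (c : ℕ → Bool) : Monoid.CoprodI (fpFam Fq) →* Multiplicative Fq :=
  Monoid.CoprodI.lift fun b =>
    match b with
    | true => AddMonoidHom.toMultiplicative (chiF Fq c)
    | false => 1

/-- the uncountable family of finite-index subgroups -/
noncomputable def SGc (c : ℕ → Bool) : Subgroup SL2 :=
  Subgroup.map (Phi Fq) (psiF Fq c).ker

lemma SGc_finiteIndex (c : ℕ → Bool) : (SGc Fq c).FiniteIndex := by
  constructor
  rw [SGc, Subgroup.index_map]
  have hker : (Phi Fq).ker = ⊥ := MonoidHom.ker_eq_bot_iff _ |>.mpr (Phi_injective Fq)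
  rw [hker, sup_bot_eq]
  haveI : Finite (Multiplicative Fq) := Finite.of_equiv Fq Multiplicative.ofAdd
  exact mul_ne_zero (Subgroup.FiniteIndex.index_ne_zero) ((rangePhi_finiteIndex Fq).index_ne_zero)

lemma mem_SGc_iff (c : ℕ → Bool) (n : ℕ) :
    (Phi Fq) (Monoid.CoprodI.of (i := true)
      (Multiplicative.ofAdd (Polynomial.monomial n (1:Fq)))) ∈ SGc Fq c ↔ c n = false := by
  constructor
  · rintro ⟨x, hx, he⟩
    have hxe : x = Monoid.CoprodI.of (i := true)
        (Multiplicative.ofAdd (Polynomial.monomial n (1:Fq))) := Phi_injective Fq he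
    rw [hxe] at hx
    have hx2 : (psiF Fq c) (Monoid.CoprodI.of (i := true)
        (Multiplicative.ofAdd (Polynomial.monomial n (1:Fq)))) = 1 := hx
    rw [psiF, Monoid.CoprodI.lift_of] at hx2
    have : chiF Fq c (Polynomial.monomial n 1) = 0 := by
      simpa using hx2
    rw [chiF_monomial] at this
    by_cases h : c n
    · rw [if_pos h] at this; exact absurd this one_ne_zero
    · simpa using h
  · intro h
    refine ⟨_, ?_, rfl⟩
    show (psiF Fq c) (Monoid.CoprodI.of (i := true)
        (Multiplicative.ofAdd (Polynomial.monomial n (1:Fq)))) = 1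
    rw [psiF, Monoid.CoprodI.lift_of]
    have hz : chiF Fq c (Polynomial.monomial n 1) = 0 := by
      rw [chiF_monomial, h]; simp
    show Multiplicative.ofAdd (chiF Fq c (Polynomial.monomial n (1:Fq))) = 1
    rw [hz]
    rfl

lemma SGc_injective : Function.Injective (SGc Fq) := by
  intro c c' h
  funext n
  have h1 := mem_SGc_iff Fq c n
  have h2 := mem_SGc_iff Fq c' n
  rw [h] at h1
  have : c n = false ↔ c' n = false := by rw [← h1, h2]
  cases hc : c n <;> cases hc' : c' n <;> simp_all

end Assemble

/-- For `A = Fq[T]`, the set of finite-index subgroups of `SL₂(A)` is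
uncountable. -/
theorem uncountable_finiteIndex_subgroups (Fq : Type*) [Field Fq] [Fintype Fq] :
    ¬ {Γ : Subgroup (Matrix.SpecialLinearGroup (Fin 2) (Polynomial Fq)) |
        Γ.FiniteIndex}.Countable := by
  intro hcount
  classical
  haveI := hcount.to_subtype
  let F : (ℕ → Bool) →
      {Γ : Subgroup (Matrix.SpecialLinearGroup (Fin 2) (Polynomial Fq)) | Γ.FiniteIndex} :=
    fun c => ⟨SGc Fq c, SGc_finiteIndex Fq c⟩
  have hFinj : Function.Injective F := by
    intro c c' h
    exact SGc_injective Fq (congrArg Subtype.val h)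
  haveI : Countable (ℕ → Bool) := hFinj.countable
  have hsetinj : Function.Injective (fun (s : Set ℕ) (n : ℕ) => decide (n ∈ s)) := by
    intro s t h
    ext n
    have := congrFun h n
    simpa using this
  haveI : Countable (Set ℕ) := hsetinj.countable
  obtain ⟨f, hf⟩ := exists_injective_nat (Set ℕ)
  exact Function.cantor_injective f hf
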